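/- Let D be a digraph, let P be a directed path of D, and let v be a vertex of D not on P. If v is adjacent (in the underlying graph of D) to every vertex of P, then D has a directed path P' whose vertex set is V(P) ∪ {v}. -/

import Mathlib

/-- A directed path in a digraph with arc relation `A`: a nonempty list of distinct
vertices each of which dominates the next. -/
def IsDipath {V : Type*} (A : V → V → Prop) (p : List V) : Prop :=
  p ≠ [] ∧ p.Nodup ∧ p.Chain' A

/-- A path partition of the digraph `(V, A)`: a collection of vertex-disjoint directed
paths covering all of `V`. -/
def IsPathPartition {V : Type*} (A : V → V → Prop) (P : Set (List V)) : Prop :=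
  (∀ p ∈ P, IsDipath A p) ∧
  (∀ p ∈ P, ∀ q ∈ P, p ≠ q → ∀ v : V, v ∈ p → v ∉ q) ∧
  (∀ v : V, ∃ p ∈ P, v ∈ p)

/-- A path partition `P` and a stable set `S` are orthogonal if every path of `P`
contains exactly one vertex of `S`. -/
def OrthogonalPP {V : Type*} (P : Set (List V)) (S : Set V) : Prop :=
  ∀ p ∈ P, ∃! v : V, v ∈ S ∧ v ∈ p

/-- if `v` is off the directed path `p` and adjacent (in the underlying
graph) to every vertex of `p`, then there is a directed path on `V(p) ∪ {v}`. -/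
theorem stmt_0 {V : Type*} [Fintype V] (A : V → V → Prop) (hirr : ∀ w : V, ¬ A w w)
    (p : List V) (hp : IsDipath A p) (v : V) (hv : v ∉ p)
    (hadj : ∀ u ∈ p, A u v ∨ A v u) :
    ∃ p' : List V, IsDipath A p' ∧ ∀ u : V, u ∈ p' ↔ (u ∈ p ∨ u = v) := by
  obtain ⟨-, hnd, hch⟩ := hp
  suffices h : ∃ p' : List V, p'.Nodup ∧ p'.Chain' A ∧
      (∀ u : V, u ∈ p' ↔ (u ∈ p ∨ u = v)) ∧
      (p'.head? = p.head? ∨ p'.head? = some v) by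
    obtain ⟨p', h1, h2, h3, -⟩ := h
    refine ⟨p', ⟨?_, h1, h2⟩, h3⟩
    intro he
    have := (h3 v).mpr (Or.inr rfl)
    simp [he] at this
  induction p with
  | nil => exact ⟨[v], by simp, List.isChain_singleton v, by simp, Or.inr rfl⟩
  | cons a rest ih =>
    have hna : v ≠ a := fun h => hv (h ▸ List.mem_cons_self (a := a) (l := rest))
    rcases hadj a (List.mem_cons_self (a := a) (l := rest)) with hav | hva
    · -- A a v : insert v into rest, prepend a
      obtain ⟨p', h1, h2, h3, h4⟩ := ih (fun h => hv (List.mem_cons_of_mem a h))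
        (fun u hu => hadj u (List.mem_cons_of_mem a hu))
        (List.Nodup.of_cons hnd) (List.IsChain.tail hch)
      have hanp : a ∉ p' := by
        intro h
        rcases (h3 a).mp h with h | h
        · exact (List.nodup_cons.mp hnd).1 h
        · exact hna h.symm
      refine ⟨a :: p', List.nodup_cons.mpr ⟨hanp, h1⟩, ?_, ?_, Or.inl rfl⟩
      · rw [show List.Chain' A (a :: p') ↔ _ from List.isChain_cons]
        refine ⟨?_, h2⟩
        intro y hy
        rcases h4 with h4 | h4
        · rw [h4] at hy
          exact (List.isChain_cons.mp hch).1 y hy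
        · rw [h4] at hy
          simp only [Option.mem_some_iff] at hy
          exact hy ▸ hav
      · intro u
        simp only [List.mem_cons, h3]
        tauto
    · -- A v a : prepend v
      refine ⟨v :: a :: rest, List.nodup_cons.mpr ⟨hv, hnd⟩,
        List.isChain_cons_cons.mpr ⟨hva, hch⟩, ?_, Or.inr rfl⟩
      intro u
      simp only [List.mem_cons]
      tauto
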